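/- Let c ≤ k be positive integers and let D ≥ 1, δ > 0, σ > 0 be real numbers such that 4ekDδ/(cσ) ≤ 1 and kδ/σ ≤ 1. Then 4 ∑_{i=c}^{k} binom(k,i) (2Dδ/σ)^i (1 + δ/σ)^{k−i} ≤ 8e (2ekDδ/(cσ))^c. -/

import Mathlib

open BigOperators

/-- The elementary tube-volume estimate: for positive integers `c ≤ k` and
reals `D ≥ 1`, `δ > 0`, `σ > 0` with `4ekDδ/(cσ) ≤ 1` and `kδ/σ ≤ 1`,
`4 ∑_{i=c}^{k} C(k,i) (2Dδ/σ)^i (1 + δ/σ)^{k−i} ≤ 8e (2ekDδ/(cσ))^c`. -/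
theorem tube_volume_estimate (c k : ℕ) (hc : 0 < c) (hck : c ≤ k)
    (D δ σ : ℝ) (hD : 1 ≤ D) (hδ : 0 < δ) (hσ : 0 < σ)
    (h1 : 4 * Real.exp 1 * k * D * δ / (c * σ) ≤ 1)
    (h2 : k * δ / σ ≤ 1) :
    4 * ∑ i ∈ Finset.Icc c k,
        (k.choose i : ℝ) * (2 * D * δ / σ) ^ i * (1 + δ / σ) ^ (k - i)
      ≤ 8 * Real.exp 1 * (2 * Real.exp 1 * k * D * δ / (c * σ)) ^ c := by
  have he : (0:ℝ) < Real.exp 1 := Real.exp_pos 1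
  have hkpos : 0 < k := lt_of_lt_of_le hc hck
  have hk : (0:ℝ) < k := by exact_mod_cast hkpos
  have hc' : (0:ℝ) < c := by exact_mod_cast hc
  set x : ℝ := 2 * Real.exp 1 * k * D * δ / (c * σ) with hxdef
  have hx0 : 0 < x := by
    apply div_pos (by positivity) (by positivity)
  have hxhalf : x ≤ 1/2 := by
    have h2x : 2 * x = 4 * Real.exp 1 * k * D * δ / (c * σ) := by
      rw [hxdef]; ring
    linarith
  -- per-term bound
  have hterm : ∀ i ∈ Finset.Icc c k,
      (k.choose i : ℝ) * (2 * D * δ / σ) ^ i * (1 + δ / σ) ^ (k - i)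
        ≤ Real.exp 1 * x ^ i := by
    intro i hi
    obtain ⟨hci, hik⟩ := Finset.mem_Icc.mp hi
    have hi0 : 0 < i := lt_of_lt_of_le hc hci
    have hi0' : (0:ℝ) < i := by exact_mod_cast hi0
    have hci' : (c:ℝ) ≤ i := by exact_mod_cast hci
    -- binomial bound
    have hA : (k.choose i : ℝ) ≤ (Real.exp 1 * k / i) ^ i := by
      calc (k.choose i : ℝ) ≤ (k:ℝ) ^ i / (i.factorial : ℝ) :=
            Nat.choose_le_pow_div i k
        _ = ((k:ℝ) / i) ^ i * ((i:ℝ) ^ i / (i.factorial : ℝ)) := by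
            rw [div_pow]
            field_simp
        _ ≤ ((k:ℝ) / i) ^ i * Real.exp i :=
            mul_le_mul_of_nonneg_left
              (Real.pow_div_factorial_le_exp (x := (i:ℝ)) (by positivity) i) (by positivity)
        _ = (Real.exp 1 * k / i) ^ i := by
            rw [mul_div_assoc, mul_pow, Real.exp_one_pow, mul_comm]
    -- bound on (1 + δ/σ)^(k-i)
    have hB : (1 + δ / σ) ^ (k - i) ≤ Real.exp 1 := by
      have h10 : (0:ℝ) ≤ 1 + δ / σ := by positivity
      calc (1 + δ / σ) ^ (k - i) ≤ Real.exp (δ / σ) ^ (k - i) :=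
            pow_le_pow_left₀ h10
              (by have := Real.add_one_le_exp (δ / σ); linarith) _
        _ = Real.exp ((k - i : ℕ) * (δ / σ)) := by
            rw [← Real.exp_nat_mul]
        _ ≤ Real.exp 1 := by
            apply Real.exp_le_exp.mpr
            have hle : ((k - i : ℕ) : ℝ) ≤ (k : ℝ) := by
              exact_mod_cast Nat.sub_le k i
            have hds : 0 ≤ δ / σ := by positivity
            calc ((k - i : ℕ) : ℝ) * (δ / σ) ≤ (k:ℝ) * (δ / σ) := by gcongr
              _ = k * δ / σ := by ring
              _ ≤ 1 := h2
    have hbase : Real.exp 1 * k / i * (2 * D * δ / σ) ≤ x := by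
      have heq : Real.exp 1 * (k:ℝ) / i * (2 * D * δ / σ)
          = 2 * Real.exp 1 * k * D * δ / (i * σ) := by
        field_simp
      rw [heq, hxdef]
      exact div_le_div_of_nonneg_left (by positivity) (by positivity)
        (by gcongr)
    calc (k.choose i : ℝ) * (2 * D * δ / σ) ^ i * (1 + δ / σ) ^ (k - i)
        ≤ (Real.exp 1 * k / i) ^ i * (2 * D * δ / σ) ^ i * Real.exp 1 := by
          apply mul_le_mul _ hB (by positivity) (by positivity)
          exact mul_le_mul_of_nonneg_right hA (by positivity)
      _ = (Real.exp 1 * k / i * (2 * D * δ / σ)) ^ i * Real.exp 1 := by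
          rw [mul_pow]
      _ ≤ x ^ i * Real.exp 1 :=
          mul_le_mul_of_nonneg_right
            (pow_le_pow_left₀ (by positivity) hbase i) he.le
      _ = Real.exp 1 * x ^ i := by ring
  -- bound each x^i by x^c * (1/2)^(i-c)
  have hgeom : ∑ i ∈ Finset.Icc c k, x ^ i ≤ 2 * x ^ c := by
    have hstep : ∀ i ∈ Finset.Icc c k, x ^ i ≤ x ^ c * (1/2 : ℝ) ^ (i - c) := by
      intro i hi
      obtain ⟨hci, _⟩ := Finset.mem_Icc.mp hi
      have : x ^ i = x ^ c * x ^ (i - c) := by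
        rw [← pow_add, Nat.add_sub_cancel' hci]
      rw [this]
      exact mul_le_mul_of_nonneg_left (pow_le_pow_left₀ hx0.le hxhalf _)
        (by positivity)
    calc ∑ i ∈ Finset.Icc c k, x ^ i
        ≤ ∑ i ∈ Finset.Icc c k, x ^ c * (1/2 : ℝ) ^ (i - c) :=
          Finset.sum_le_sum hstep
      _ = x ^ c * ∑ i ∈ Finset.Icc c k, (1/2 : ℝ) ^ (i - c) := by
          rw [Finset.mul_sum]
      _ = x ^ c * ∑ j ∈ Finset.range (k + 1 - c), (1/2 : ℝ) ^ j := by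
          congr 1
          rw [← Finset.Ico_add_one_right_eq_Icc, Finset.sum_Ico_eq_sum_range]
          apply Finset.sum_congr rfl
          intro j _
          congr 1
          omega
      _ ≤ x ^ c * 2 := by
          gcongr
          exact sum_geometric_two_le _
      _ = 2 * x ^ c := by ring
  calc 4 * ∑ i ∈ Finset.Icc c k,
        (k.choose i : ℝ) * (2 * D * δ / σ) ^ i * (1 + δ / σ) ^ (k - i)
      ≤ 4 * ∑ i ∈ Finset.Icc c k, Real.exp 1 * x ^ i := by
        have := Finset.sum_le_sum hterm
        linarith
    _ = 4 * Real.exp 1 * ∑ i ∈ Finset.Icc c k, x ^ i := by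
        rw [← Finset.mul_sum]; ring
    _ ≤ 4 * Real.exp 1 * (2 * x ^ c) := by gcongr
    _ = 8 * Real.exp 1 * x ^ c := by ring
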